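/- Let M be a compact subset of ℝ^{n₀}, σ : ℝ → ℝ a continuous monotone activation function, and F ∈ NN_σ^{n₀}(n₀) a network function from ℝ^{n₀} to ℝ^{n₀} all of whose layers have width exactly n₀ and all of whose weight matrices W_j ∈ ℝ^{n₀×n₀}, j = 1,…,L, are invertible (square with full rank). If for some x ∈ M° (an interior point of M) the image F(x) is a boundary point of F(M), i.e. F(x) ∈ ∂(F(M)), then there exists x̃ ∈ ∂M such that F(x̃) = F(x). -/

import Mathlib

noncomputable section

/-- Network functions `ℝ^n → ℝ^n` with activation `σ`, all of whose layers have width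
exactly `n` and all of whose (square) weight matrices are invertible:
`F = W_L ∘ A_{L-1} ∘ ⋯ ∘ A_1 + b_L` with `A_j x = σ (W_j x + b_j)`. -/
inductive IsInvNetChain (σ : ℝ → ℝ) (n : ℕ) : ((Fin n → ℝ) → (Fin n → ℝ)) → Prop
  | last (W : Matrix (Fin n) (Fin n) ℝ) (v : Fin n → ℝ) (hW : IsUnit W) :
      IsInvNetChain σ n (fun x => W.mulVec x + v)
  | hidden (W : Matrix (Fin n) (Fin n) ℝ) (v : Fin n → ℝ) {g : (Fin n → ℝ) → (Fin n → ℝ)}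
      (hW : IsUnit W) (hg : IsInvNetChain σ n g) :
      IsInvNetChain σ n (fun x => g (fun i => σ (W.mulVec x i + v i)))

open Set Metric

/-- Core lemma: componentwise application of a monotone continuous function. -/
lemma core_mono {n : ℕ} {σ : ℝ → ℝ} (hc : Continuous σ) (hm : Monotone σ)
    {M : Set (Fin n → ℝ)} (hM : IsCompact M) {x : Fin n → ℝ} (hx : x ∈ interior M)
    (hS : (fun i => σ (x i)) ∈ frontier ((fun (v : Fin n → ℝ) i => σ (v i)) '' M)) :
    ∃ x' ∈ frontier M, ∀ i, σ (x' i) = σ (x i) := by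
  set I : Fin n → Set ℝ := fun i => σ ⁻¹' {σ (x i)} with hI
  set C : Set (Fin n → ℝ) := Set.pi univ I with hC
  have hxC : x ∈ C := fun i _ => rfl
  by_cases hfr : (C ∩ frontier M).Nonempty
  · obtain ⟨w, hwC, hwF⟩ := hfr
    exact ⟨w, hwF, fun i => hwC i (mem_univ i)⟩
  have hfr' : ∀ c ∈ C, c ∉ frontier M := fun c hcC hcF => hfr ⟨c, hcC, hcF⟩
  have hIconv : ∀ i, Convex ℝ (I i) := by
    intro i
    rw [convex_iff_ordConnected]
    constructor
    intro p hp q hq t ht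
    have hp' : σ p = σ (x i) := hp
    have hq' : σ q = σ (x i) := hq
    have h1 : σ p ≤ σ t := hm ht.1
    have h2 : σ t ≤ σ q := hm ht.2
    show σ t = σ (x i)
    rw [hp'] at h1; rw [hq'] at h2
    exact le_antisymm h2 h1
  have hCconv : Convex ℝ C := convex_pi fun i _ => hIconv i
  have hCclosed : IsClosed C :=
    isClosed_set_pi fun i _ => isClosed_singleton.preimage hc
  have hMclosed : IsClosed M := hM.isClosed
  have hCM : C ⊆ M := by
    by_contra h
    obtain ⟨w, hwC, hwM⟩ := Set.not_subset.mp h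
    obtain ⟨z, hzC, hz1, hz2⟩ := hCconv.isPreconnected (interior M) (closure M)ᶜ
      isOpen_interior isClosed_closure.isOpen_compl
      (by
        intro c hcC
        by_cases hcl : c ∈ closure M
        · left
          by_contra hint
          exact hfr' c hcC ⟨hcl, hint⟩
        · exact Or.inr hcl)
      ⟨x, hxC, hx⟩
      ⟨w, hwC, by rw [hMclosed.closure_eq]; exact hwM⟩
    exact hz2 (subset_closure (interior_subset hz1))
  have hCint : C ⊆ interior M := by
    intro c hc
    by_contra hint
    exact hfr' c hc ⟨subset_closure (hCM hc), hint⟩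
  have hCcomp : IsCompact C := hM.of_isClosed_subset hCclosed hCM
  have hIcomp : ∀ i, IsCompact (I i) := by
    intro i
    have himg : (fun v : Fin n → ℝ => v i) '' C = I i := by
      apply Subset.antisymm
      · rintro t ⟨v, hv, rfl⟩
        exact hv i (mem_univ i)
      · intro t ht
        refine ⟨Function.update x i t, fun j _ => ?_, Function.update_self i t x⟩
        rcases eq_or_ne j i with rfl | hne
        · rwa [Function.update_self]
        · rw [Function.update_of_ne hne]
          exact rfl
    rw [← himg]
    exact hCcomp.image (continuous_apply i)
  have hInon : ∀ i, (I i).Nonempty := fun i => ⟨x i, rfl⟩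
  set a : Fin n → ℝ := fun i => sInf (I i) with ha
  set b : Fin n → ℝ := fun i => sSup (I i) with hb
  have haI : ∀ i, a i ∈ I i := fun i => (hIcomp i).sInf_mem (hInon i)
  have hbI : ∀ i, b i ∈ I i := fun i => (hIcomp i).sSup_mem (hInon i)
  have hab : ∀ i, a i ≤ b i := fun i =>
    csInf_le_csSup (hInon i) (hIcomp i).bddBelow (hIcomp i).bddAbove
  have hIeq : ∀ i, I i = Icc (a i) (b i) := by
    intro i
    apply Subset.antisymm
    · intro t ht
      exact ⟨csInf_le (hIcomp i).bddBelow ht, le_csSup (hIcomp i).bddAbove ht⟩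
    · intro t ht
      have h1 : σ (a i) ≤ σ t := hm ht.1
      have h2 : σ t ≤ σ (b i) := hm ht.2
      have ha' : σ (a i) = σ (x i) := haI i
      have hb' : σ (b i) = σ (x i) := hbI i
      rw [ha'] at h1; rw [hb'] at h2
      exact le_antisymm h2 h1
  obtain ⟨δ, hδpos, hδ⟩ := hCcomp.exists_thickening_subset_open isOpen_interior hCint
  set ε := δ / 2 with hε
  have hεpos : 0 < ε := half_pos hδpos
  have hBsub : Set.pi univ (fun i => Icc (a i - ε) (b i + ε)) ⊆ M := by
    intro v hv
    have hthick : v ∈ thickening δ C := by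
      rw [mem_thickening_iff]
      refine ⟨fun i => max (a i) (min (v i) (b i)), fun i _ => ?_, ?_⟩
      · rw [hIeq i]
        exact ⟨le_max_left _ _, max_le (hab i) (min_le_right _ _)⟩
      · rw [dist_pi_lt_iff hδpos]
        intro i
        have hvi := hv i (mem_univ i)
        have habs : |v i - max (a i) (min (v i) (b i))| ≤ ε := by
          rcases le_total (v i) (a i) with h | h
          · rw [min_eq_left (h.trans (hab i)), max_eq_left h, abs_sub_comm,
              abs_of_nonneg (by linarith)]
            linarith [hvi.1]
          · rcases le_total (b i) (v i) with h2 | h2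
            · rw [min_eq_right h2, max_eq_right (hab i), abs_of_nonneg (by linarith)]
              linarith [hvi.2]
            · rw [min_eq_left h2, max_eq_right h, sub_self, abs_zero]
              exact hεpos.le
        calc dist (v i) (max (a i) (min (v i) (b i)))
            = |v i - max (a i) (min (v i) (b i))| := Real.dist_eq _ _
          _ ≤ ε := habs
          _ < δ := by rw [hε]; linarith
    exact interior_subset (hδ hthick)
  have hlt1 : ∀ i, σ (a i - ε) < σ (x i) := by
    intro i
    have ha' : σ (a i) = σ (x i) := haI i
    have hle : σ (a i - ε) ≤ σ (x i) := by
      rw [← ha']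
      exact hm (by linarith)
    rcases hle.lt_or_eq with h | h
    · exact h
    · exfalso
      have : a i - ε ∈ I i := h
      have h2 : a i ≤ a i - ε := csInf_le (hIcomp i).bddBelow this
      linarith
  have hlt2 : ∀ i, σ (x i) < σ (b i + ε) := by
    intro i
    have hb' : σ (b i) = σ (x i) := hbI i
    have hle : σ (x i) ≤ σ (b i + ε) := by
      rw [← hb']
      exact hm (by linarith)
    rcases hle.lt_or_eq with h | h
    · exact h
    · exfalso
      have : b i + ε ∈ I i := h.symm
      have h2 : b i + ε ≤ b i := le_csSup (hIcomp i).bddAbove this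
      linarith
  set U := Set.pi univ (fun i => Ioo (σ (a i - ε)) (σ (b i + ε))) with hU
  have hUopen : IsOpen U := isOpen_set_pi finite_univ fun i _ => isOpen_Ioo
  have hxU : (fun i => σ (x i)) ∈ U := fun i _ => ⟨hlt1 i, hlt2 i⟩
  have hUsub : U ⊆ (fun (v : Fin n → ℝ) i => σ (v i)) '' M := by
    intro y hy
    have hmem : ∀ i, y i ∈ σ '' Icc (a i - ε) (b i + ε) := by
      intro i
      apply intermediate_value_Icc (by linarith [hab i]) hc.continuousOn
      exact ⟨(hy i (mem_univ i)).1.le, (hy i (mem_univ i)).2.le⟩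
    choose v hv1 hv2 using hmem
    exact ⟨v, hBsub (fun i _ => hv1 i), funext hv2⟩
  exact absurd (interior_maximal hUsub hUopen hxU) hS.2

/-- Core lemma for monotone-or-antitone `σ`. -/
lemma core_lemma {n : ℕ} {σ : ℝ → ℝ} (hc : Continuous σ) (hσm : Monotone σ ∨ Antitone σ)
    {M : Set (Fin n → ℝ)} (hM : IsCompact M) {x : Fin n → ℝ} (hx : x ∈ interior M)
    (hS : (fun i => σ (x i)) ∈ frontier ((fun (v : Fin n → ℝ) i => σ (v i)) '' M)) :
    ∃ x' ∈ frontier M, ∀ i, σ (x' i) = σ (x i) := by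
  rcases hσm with hm | hm
  · exact core_mono hc hm hM hx hS
  · set τ : ℝ → ℝ := fun t => -σ t with hτ
    have hτc : Continuous τ := hc.neg
    have hτm : Monotone τ := fun p q h => neg_le_neg (hm h)
    have himg : (fun (v : Fin n → ℝ) i => τ (v i)) '' M
        = (Homeomorph.neg (Fin n → ℝ)) '' ((fun (v : Fin n → ℝ) i => σ (v i)) '' M) := by
      rw [Set.image_image]
      rfl
    have hmem : (fun i => τ (x i)) ∈ frontier ((fun (v : Fin n → ℝ) i => τ (v i)) '' M) := by
      rw [himg, ← Homeomorph.image_frontier]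
      exact ⟨fun i => σ (x i), hS, rfl⟩
    obtain ⟨x', hx', hx'eq⟩ := core_mono hτc hτm hM hx hmem
    exact ⟨x', hx', fun i => neg_injective (hx'eq i)⟩

/-- An invertible affine map as a homeomorphism. -/
lemma affine_homeo {n : ℕ} (W : Matrix (Fin n) (Fin n) ℝ) (v : Fin n → ℝ) (hW : IsUnit W) :
    ∃ e : (Fin n → ℝ) ≃ₜ (Fin n → ℝ), ∀ z, e z = W.mulVec z + v := by
  have hdet : IsUnit W.det := (Matrix.isUnit_iff_isUnit_det W).1 hW
  refine ⟨⟨⟨fun z => W.mulVec z + v, fun y => W⁻¹.mulVec (y - v), ?_, ?_⟩, ?_, ?_⟩, fun z => rfl⟩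
  · intro z
    simp [Matrix.mulVec_mulVec, Matrix.nonsing_inv_mul W hdet, Matrix.one_mulVec]
  · intro y
    simp [Matrix.mulVec_mulVec, Matrix.mul_nonsing_inv W hdet, Matrix.one_mulVec]
  · exact (continuous_const.matrix_mulVec continuous_id).add continuous_const
  · exact continuous_const.matrix_mulVec (continuous_id.sub continuous_const)

/-- Single-layer version of the theorem. -/
lemma layer_lemma {n : ℕ} {σ : ℝ → ℝ} (hc : Continuous σ) (hσm : Monotone σ ∨ Antitone σ)
    (W : Matrix (Fin n) (Fin n) ℝ) (v : Fin n → ℝ) (hW : IsUnit W)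
    {M : Set (Fin n → ℝ)} (hM : IsCompact M) {x : Fin n → ℝ} (hx : x ∈ interior M)
    (hA : (fun i => σ (W.mulVec x i + v i))
      ∈ frontier ((fun (z : Fin n → ℝ) i => σ (W.mulVec z i + v i)) '' M)) :
    ∃ x' ∈ frontier M,
      (fun i => σ (W.mulVec x' i + v i)) = (fun i => σ (W.mulVec x i + v i)) := by
  obtain ⟨e, he⟩ := affine_homeo W v hW
  have hcoord : ∀ z : Fin n → ℝ, ∀ i, W.mulVec z i + v i = e z i := by
    intro z i
    rw [he z]
    rfl
  have himg : (fun (z : Fin n → ℝ) i => σ (W.mulVec z i + v i)) '' M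
      = (fun (w : Fin n → ℝ) i => σ (w i)) '' (e '' M) := by
    rw [Set.image_image]
    apply Set.image_congr
    intro z _
    funext i
    rw [hcoord z i]
  have hM' : IsCompact (e '' M) := hM.image e.continuous
  have hx' : e x ∈ interior (e '' M) := by
    rw [← Homeomorph.image_interior]
    exact ⟨x, hx, rfl⟩
  have hS : (fun i => σ (e x i)) ∈ frontier ((fun (w : Fin n → ℝ) i => σ (w i)) '' (e '' M)) := by
    rw [← himg]
    have : (fun i => σ (e x i)) = (fun i => σ (W.mulVec x i + v i)) := by
      funext i; rw [hcoord x i]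
    rw [this]
    exact hA
  obtain ⟨z, hz, hzeq⟩ := core_lemma hc hσm hM' hx' hS
  rw [← Homeomorph.image_frontier] at hz
  obtain ⟨x', hx'F, rfl⟩ := hz
  refine ⟨x', hx'F, ?_⟩
  funext i
  rw [hcoord x' i, hcoord x i]
  exact hzeq i

lemma chain_aux {n : ℕ} {σ : ℝ → ℝ} (hc : Continuous σ) (hσm : Monotone σ ∨ Antitone σ)
    {F : (Fin n → ℝ) → (Fin n → ℝ)} (hF : IsInvNetChain σ n F) :
    ∀ M : Set (Fin n → ℝ), IsCompact M → ∀ x ∈ interior M,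
      F x ∈ frontier (F '' M) → ∃ x' ∈ frontier M, F x' = F x := by
  induction hF with
  | last W v hW =>
    intro M hM x hx hFx
    obtain ⟨e, he⟩ := affine_homeo W v hW
    have himg : (fun z => W.mulVec z + v) '' M = e '' M :=
      Set.image_congr fun z _ => (he z).symm
    rw [himg, ← Homeomorph.image_frontier] at hFx
    obtain ⟨x', hx'F, hex'⟩ := hFx
    refine ⟨x', hx'F, ?_⟩
    show W.mulVec x' + v = W.mulVec x + v
    exact (he x').symm.trans hex'
  | @hidden W v g hW hg IH =>
    intro M hM x hx hFx
    set A : (Fin n → ℝ) → (Fin n → ℝ) := fun z => fun i => σ (W.mulVec z i + v i) with hAdef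
    have hAcont : Continuous A := by
      apply continuous_pi
      intro i
      exact hc.comp (((continuous_apply i).comp
        (continuous_const.matrix_mulVec continuous_id)).add continuous_const)
    have hN : IsCompact (A '' M) := hM.image hAcont
    have himg : (fun z => g (A z)) '' M = g '' (A '' M) := (Set.image_image g A M).symm
    by_cases hint : A x ∈ interior (A '' M)
    · have hFx' : g (A x) ∈ frontier (g '' (A '' M)) := by rw [← himg]; exact hFx
      obtain ⟨z', hz'F, hgz⟩ := IH (A '' M) hN (A x) hint hFx'
      have hz'N : z' ∈ A '' M := hN.isClosed.frontier_subset hz'F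
      obtain ⟨x'', hx''M, hx''⟩ := hz'N
      by_cases hb : x'' ∈ frontier M
      · refine ⟨x'', hb, ?_⟩
        show g (A x'') = g (A x)
        rw [hx'', hgz]
      · have hx''int : x'' ∈ interior M := by
          by_contra hcon
          exact hb ⟨subset_closure hx''M, hcon⟩
        have hAfr : (fun i => σ (W.mulVec x'' i + v i))
            ∈ frontier ((fun (z : Fin n → ℝ) i => σ (W.mulVec z i + v i)) '' M) := by
          show A x'' ∈ frontier (A '' M)
          rw [hx'']
          exact hz'F
        obtain ⟨x', hx'F, hAx'⟩ := layer_lemma hc hσm W v hW hM hx''int hAfr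
        refine ⟨x', hx'F, ?_⟩
        show g (A x') = g (A x)
        have : A x' = A x'' := hAx'
        rw [this, hx'', hgz]
    · have hfrA : A x ∈ frontier (A '' M) :=
        ⟨subset_closure ⟨x, interior_subset hx, rfl⟩, hint⟩
      obtain ⟨x', hx'F, hAx'⟩ := layer_lemma hc hσm W v hW hM hx hfrA
      refine ⟨x', hx'F, ?_⟩
      show g (A x') = g (A x)
      rw [show A x' = A x from hAx']

theorem boundary_image_of_interior_point
    (n₀ : ℕ) (M : Set (Fin n₀ → ℝ)) (hM : IsCompact M)
    (σ : ℝ → ℝ) (hσc : Continuous σ) (hσm : Monotone σ ∨ Antitone σ)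
    (F : (Fin n₀ → ℝ) → (Fin n₀ → ℝ)) (hF : IsInvNetChain σ n₀ F)
    (x : Fin n₀ → ℝ) (hx : x ∈ interior M) (hFx : F x ∈ frontier (F '' M)) :
    ∃ x' ∈ frontier M, F x' = F x :=
  chain_aux hσc hσm hF M hM x hx hFx
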